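/- arXiv:2110.02754 — 2 statements merged into one kernel-verified Lean document; each statement's English description precedes it below -/
import Mathlib

section
/- (Inverse QFT) If f ∈ L¹(ℝ², ℍ) and F[f] ∈ L¹(ℝ², ℍ), then for a.e. x, f(x₁, x₂) = (2π)^{-2} ∫_{ℝ²} e^{i w₁ x₁} F[f](w₁, w₂) e^{j w₂ x₂} dw. -/
open MeasureTheory Real

noncomputable section

/-- The quaternion imaginary unit i. -/
def qi : Quaternion ℝ := ⟨0, 1, 0, 0⟩
/-- The quaternion imaginary unit j. -/
def qj : Quaternion ℝ := ⟨0, 0, 1, 0⟩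
/-- The quaternion imaginary unit k. -/
def qk : Quaternion ℝ := ⟨0, 0, 0, 1⟩

/-- e^{iθ} = cos θ + i sin θ as a quaternion. -/
def eI (θ : ℝ) : Quaternion ℝ := ⟨Real.cos θ, Real.sin θ, 0, 0⟩
/-- e^{jθ} = cos θ + j sin θ as a quaternion. -/
def eJ (θ : ℝ) : Quaternion ℝ := ⟨Real.cos θ, 0, Real.sin θ, 0⟩

/-- The two-sided quaternion Fourier transform. -/
def QFT (f : ℝ × ℝ → Quaternion ℝ) (w : ℝ × ℝ) : Quaternion ℝ :=
  ∫ x : ℝ × ℝ, eI (-(w.1 * x.1)) * f x * eJ (-(w.2 * x.2))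

/-- Parameters of an offset linear canonical transform. -/
structure OLCTParams where
  a : ℝ
  b : ℝ
  c : ℝ
  d : ℝ
  p : ℝ
  q : ℝ
  hb : b ≠ 0
  hdet : a * d - b * c = 1

/-- The QOLCT kernel K_{A}^{i}(x,w); the factor (2πbi)^{-1/2} is
(2π|b|)^{-1/2} e^{-iπ/4}, a quaternion of norm (2π|b|)^{-1/2}. -/
def KI (P : OLCTParams) (x w : ℝ) : Quaternion ℝ :=
  (Real.sqrt (2 * π * |P.b|))⁻¹ •
    (eI (-(π/4)) *
      eI ((1/(2*P.b)) * (P.a*x^2 - 2*x*(w-P.p) - 2*w*(P.d*P.p - P.b*P.q) + P.d*(w^2+P.p^2))))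

/-- The QOLCT kernel K_{A}^{j}(x,w). -/
def KJ (P : OLCTParams) (x w : ℝ) : Quaternion ℝ :=
  (Real.sqrt (2 * π * |P.b|))⁻¹ •
    (eJ (-(π/4)) *
      eJ ((1/(2*P.b)) * (P.a*x^2 - 2*x*(w-P.p) - 2*w*(P.d*P.p - P.b*P.q) + P.d*(w^2+P.p^2))))

/-- The two-sided short-time quaternion offset linear canonical transform. -/
def STQOLCT (P1 P2 : OLCTParams) (φ f : ℝ × ℝ → Quaternion ℝ) (w u : ℝ × ℝ) : Quaternion ℝ :=
  ∫ x : ℝ × ℝ, KI P1 x.1 w.1 * (f x * star (φ (x - u))) * KJ P2 x.2 w.2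

/-- Euclidean norm on ℝ². -/
def nrm (x : ℝ × ℝ) : ℝ := Real.sqrt (x.1^2 + x.2^2)

namespace QFTInv


open Complex FourierTransform

@[simp] lemma eI_re (θ : ℝ) : (eI θ).re = Real.cos θ := rfl
@[simp] lemma eI_imI (θ : ℝ) : (eI θ).imI = Real.sin θ := rfl
@[simp] lemma eI_imJ (θ : ℝ) : (eI θ).imJ = 0 := rfl
@[simp] lemma eI_imK (θ : ℝ) : (eI θ).imK = 0 := rfl
@[simp] lemma eJ_re (θ : ℝ) : (eJ θ).re = Real.cos θ := rfl
@[simp] lemma eJ_imI (θ : ℝ) : (eJ θ).imI = 0 := rfl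
@[simp] lemma eJ_imJ (θ : ℝ) : (eJ θ).imJ = Real.sin θ := rfl
@[simp] lemma eJ_imK (θ : ℝ) : (eJ θ).imK = 0 := rfl

lemma norm_eI (θ : ℝ) : ‖eI θ‖ = 1 := by
  have : ‖eI θ‖ = Real.sqrt (Quaternion.normSq (eI θ)) := rfl
  rw [this, Quaternion.normSq_def']
  simp [Real.sin_sq_add_cos_sq, Real.cos_sq_add_sin_sq]

lemma norm_eJ (θ : ℝ) : ‖eJ θ‖ = 1 := by
  have : ‖eJ θ‖ = Real.sqrt (Quaternion.normSq (eJ θ)) := rfl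
  rw [this, Quaternion.normSq_def']
  simp [Real.cos_sq_add_sin_sq]

lemma continuous_eI : Continuous eI := by
  have h : eI = fun θ => (Real.cos θ : Quaternion ℝ) + Real.sin θ • qi := by
    funext θ
    ext <;> simp <;> simp [qi]
  rw [h]
  exact (Quaternion.continuous_coe.comp Real.continuous_cos).add
    (Real.continuous_sin.smul continuous_const)

lemma continuous_eJ : Continuous eJ := by
  have h : eJ = fun θ => (Real.cos θ : Quaternion ℝ) + Real.sin θ • qj := by
    funext θ
    ext <;> simp <;> simp [qj]
  rw [h]
  exact (Quaternion.continuous_coe.comp Real.continuous_cos).add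
    (Real.continuous_sin.smul continuous_const)

/-- `q ↦ (q.re + q.imK) + (q.imI - q.imJ) I`, the "+" complex component. -/
def Φp : Quaternion ℝ →L[ℝ] ℂ :=
  LinearMap.toContinuousLinearMap
  { toFun := fun q => ⟨q.re + q.imK, q.imI - q.imJ⟩
    map_add' := by intro a b; apply Complex.ext <;> simp <;> ring
    map_smul' := by intro r a; apply Complex.ext <;> simp [Complex.real_smul] <;> ring }

/-- `q ↦ (q.re - q.imK) + (q.imI + q.imJ) I`, the "−" complex component. -/
def Φm : Quaternion ℝ →L[ℝ] ℂ :=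
  LinearMap.toContinuousLinearMap
  { toFun := fun q => ⟨q.re - q.imK, q.imI + q.imJ⟩
    map_add' := by intro a b; apply Complex.ext <;> simp <;> ring
    map_smul' := by intro r a; apply Complex.ext <;> simp [Complex.real_smul] <;> ring }

@[simp] lemma Φp_re (q : Quaternion ℝ) : (Φp q).re = q.re + q.imK := rfl
@[simp] lemma Φp_im (q : Quaternion ℝ) : (Φp q).im = q.imI - q.imJ := rfl
@[simp] lemma Φm_re (q : Quaternion ℝ) : (Φm q).re = q.re - q.imK := rfl
@[simp] lemma Φm_im (q : Quaternion ℝ) : (Φm q).im = q.imI + q.imJ := rfl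

lemma quat_eq_of_Φ {a b : Quaternion ℝ} (hp : Φp a = Φp b) (hm : Φm a = Φm b) : a = b := by
  have h1 := congrArg Complex.re hp
  have h2 := congrArg Complex.im hp
  have h3 := congrArg Complex.re hm
  have h4 := congrArg Complex.im hm
  simp only [Φp_re, Φp_im, Φm_re, Φm_im] at h1 h2 h3 h4
  ext <;> linarith

lemma Φp_kernel (θ φ : ℝ) (q : Quaternion ℝ) :
    Φp (eI θ * q * eJ φ) = Complex.exp ((θ - φ) * Complex.I) * Φp q := by
  rw [Complex.exp_mul_I]
  apply Complex.ext <;>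
    simp [Quaternion.re_mul, Quaternion.imI_mul, Quaternion.imJ_mul, Quaternion.imK_mul,
      Complex.add_re, Complex.add_im, Complex.mul_re, Complex.mul_im,
      ← Complex.ofReal_sub, ← Complex.ofReal_cos, ← Complex.ofReal_sin, Real.cos_sub, Real.sin_sub] <;>
    ring

lemma Φm_kernel (θ φ : ℝ) (q : Quaternion ℝ) :
    Φm (eI θ * q * eJ φ) = Complex.exp ((θ + φ) * Complex.I) * Φm q := by
  rw [Complex.exp_mul_I]
  apply Complex.ext <;>
    simp [Quaternion.re_mul, Quaternion.imI_mul, Quaternion.imJ_mul, Quaternion.imK_mul,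
      Complex.add_re, Complex.add_im, Complex.mul_re, Complex.mul_im,
      ← Complex.ofReal_add, ← Complex.ofReal_cos, ← Complex.ofReal_sin, Real.cos_add, Real.sin_add] <;>
    ring



open Complex FourierTransform
open scoped RealInnerProductSpace

abbrev V2 := EuclideanSpace ℝ (Fin 2)

def T : V2 ≃ᵐ ℝ × ℝ := (MeasurableEquiv.toLp 2 (Fin 2 → ℝ)).symm.trans MeasurableEquiv.finTwoArrow

lemma T_apply (v : V2) : T v = (v 0, v 1) := rfl

lemma hT : MeasurePreserving T volume volume :=
  (volume_preserving_finTwoArrow ℝ).comp (EuclideanSpace.volume_preserving_symm_measurableEquiv_toLp (Fin 2))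

lemma inner_eq (v w : V2) : ⟪v, w⟫ = v 0 * w 0 + v 1 * w 1 := by
  simp [PiLp.inner_apply, Fin.sum_univ_two, RCLike.inner_apply]
  ring

/-- Smooth compactly supported functions are Schwartz. -/
def toSchwartz (φ : V2 → ℂ) (h1 : ContDiff ℝ ((⊤ : ℕ∞) : WithTop ℕ∞) φ) (h2 : HasCompactSupport φ) :
    SchwartzMap V2 ℂ where
  toFun := φ
  smooth' := h1
  decay' := by
    intro k n
    have hcont : Continuous fun x : V2 => ‖x‖ ^ k * ‖iteratedFDeriv ℝ n φ x‖ :=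
      ((continuous_norm.pow k).mul
        (h1.continuous_iteratedFDeriv (by exact_mod_cast le_top)).norm)
    have hsupp : HasCompactSupport fun x : V2 => ‖x‖ ^ k * ‖iteratedFDeriv ℝ n φ x‖ :=
      HasCompactSupport.mul_left ((h2.iteratedFDeriv n).norm)
    obtain ⟨C, hC⟩ := hcont.bounded_above_of_compact_support hsupp
    exact ⟨C, fun x => (le_abs_self _).trans ((Real.norm_eq_abs _ ▸ hC x))⟩

lemma continuous_fourier {g : V2 → ℂ} (hg : Integrable g) : Continuous (𝓕 g) :=
  VectorFourier.fourierIntegral_continuous Real.continuous_fourierChar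
    (by exact continuous_inner) hg

lemma fourier_comp_neg (g : V2 → ℂ) : 𝓕 (fun v => g (-v)) = 𝓕⁻ g := by
  funext w
  rw [Real.fourier_eq, Real.fourierInv_eq]
  rw [show (∫ v, 𝐞 (-⟪v, w⟫) • g (-v)) = ∫ v, 𝐞 (-⟪-v, w⟫) • g (-(-v)) from
    (integral_neg_eq_self (fun v => 𝐞 (-⟪v, w⟫) • g (-v)) volume).symm]
  simp [inner_neg_left]

lemma integrable_comp_neg {g : V2 → ℂ} (hg : Integrable g) :
    Integrable (fun v => g (-v)) :=
  ((Measure.measurePreserving_neg (volume : Measure V2)).integrable_comp_emb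
    (MeasurableEquiv.neg V2).measurableEmbedding).2 hg

/-- Multiplication formula for the Fourier transform. -/
lemma mult_formula {u v : V2 → ℂ} (hu : Integrable u) (hv : Integrable v) :
    ∫ ξ, 𝓕 u ξ * v ξ = ∫ x, u x * 𝓕 v x := by
  have h := VectorFourier.integral_fourierIntegral_smul_eq_flip (L := innerₗ V2)
    Real.continuous_fourierChar (by exact continuous_inner) hu hv
  have h2 : ∀ x, VectorFourier.fourierIntegral 𝐞 volume (innerₗ V2).flip v x = 𝓕 v x := by
    intro x
    rw [Real.fourier_eq]
    unfold VectorFourier.fourierIntegral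
    congr 1
    funext y
    rw [show ((innerₗ V2).flip y) x = ⟪y, x⟫ from (real_inner_comm y x)]
  simp only [smul_eq_mul, h2] at h
  exact h

/-- a.e. Fourier inversion on `V2` without continuity hypothesis. -/
theorem ae_fourier_inversion {g : V2 → ℂ} (hg : Integrable g) (hFg : Integrable (𝓕 g)) :
    ∀ᵐ v : V2, g v = 𝓕⁻ (𝓕 g) v := by
  have hcont : Continuous (𝓕⁻ (𝓕 g)) := by
    have : 𝓕⁻ (𝓕 g) = fun v => 𝓕 (𝓕 g) (-v) := by
      funext v; exact Real.fourierInv_eq_fourier_neg _ _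
    rw [this]
    exact (continuous_fourier hFg).comp continuous_neg
  apply ae_eq_of_integral_contDiff_smul_eq hg.locallyIntegrable
    (hcont.locallyIntegrable)
  intro φ hφ1 hφ2
  set φc : V2 → ℂ := fun x => (φ x : ℂ) with hφcdef
  have hφc1 : ContDiff ℝ ((⊤ : ℕ∞) : WithTop ℕ∞) φc := Complex.ofRealCLM.contDiff.comp hφ1
  have hφc2 : HasCompactSupport φc := hφ2.comp_left (g := fun r : ℝ => (r : ℂ)) Complex.ofReal_zero
  have hsint : Integrable φc := (toSchwartz φc hφc1 hφc2).integrable (μ := volume)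
  have hFs : Integrable (𝓕 φc) := by
    have h := (SchwartzMap.fourierTransformCLM ℂ (toSchwartz φc hφc1 hφc2)).integrable (μ := volume)
    rwa [SchwartzMap.fourierTransformCLM_apply] at h
  have hFs' : Integrable (𝓕⁻ φc) := by
    rw [← fourier_comp_neg φc]
    -- 𝓕 (φc ∘ neg)
    have h1 : Integrable (fun v => φc (-v)) := integrable_comp_neg hsint
    have hsch : ContDiff ℝ ((⊤ : ℕ∞) : WithTop ℕ∞) (fun v : V2 => φc (-v)) :=
      hφc1.comp (contDiff_neg)
    have hsupp : HasCompactSupport (fun v : V2 => φc (-v)) :=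
      hφc2.comp_homeomorph (Homeomorph.neg V2)
    have h := (SchwartzMap.fourierTransformCLM ℂ (toSchwartz _ hsch hsupp)).integrable (μ := volume)
    rwa [SchwartzMap.fourierTransformCLM_apply] at h
  calc ∫ x, φ x • g x
      = ∫ x, g x * φc x := by
        congr 1; funext x; rw [Complex.real_smul, mul_comm]
    _ = ∫ x, g x * 𝓕 (𝓕⁻ φc) x := by
        have hcφc : Continuous φc := by
          exact Complex.continuous_ofReal.comp hφ1.continuous
        rw [Continuous.fourier_fourierInv_eq hcφc hsint hFs]
    _ = ∫ ξ, 𝓕 g ξ * 𝓕⁻ φc ξ := (mult_formula hg hFs').symm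
    _ = ∫ ξ, 𝓕 g ξ * 𝓕 (fun v => φc (-v)) ξ := by rw [fourier_comp_neg]
    _ = ∫ x, 𝓕 (𝓕 g) x * φc (-x) := by
        have h := mult_formula hFg (integrable_comp_neg hsint)
        rw [← h]
    _ = ∫ x, 𝓕 (𝓕 g) (-x) * φc x := by
        rw [show (∫ x, 𝓕 (𝓕 g) (-x) * φc x) = ∫ x, 𝓕 (𝓕 g) (-(-x)) * φc (-x) from
          (integral_neg_eq_self (fun x => 𝓕 (𝓕 g) (-x) * φc x) volume).symm]
        simp
    _ = ∫ x, φ x • 𝓕⁻ (𝓕 g) x := by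
        congr 1; funext x
        rw [Complex.real_smul, mul_comm, Real.fourierInv_eq_fourier_neg]

-- TESTS appended to part2
theorem inversion_C {g : ℝ × ℝ → ℂ} (hg : Integrable g)
    {Fg : ℝ × ℝ → ℂ} (hFg : Integrable Fg)
    (hdef : ∀ w : ℝ × ℝ, Fg w = ∫ x : ℝ × ℝ,
      Complex.exp (-((w.1 * x.1 + w.2 * x.2 : ℝ) : ℂ) * Complex.I) * g x) :
    ∀ᵐ x : ℝ × ℝ, g x = ((2 * π) ^ 2)⁻¹ •
      ∫ w : ℝ × ℝ, Complex.exp (((w.1 * x.1 + w.2 * x.2 : ℝ) : ℂ) * Complex.I) * Fg w := by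
  set G : V2 → ℂ := fun v => g (T v) with hGdef
  have hG : Integrable G := (hT.integrable_comp_emb T.measurableEmbedding).2 hg
  have key : ∀ ξ : V2, 𝓕 G ξ = Fg ((2 * π) • T ξ) := by
    intro ξ
    rw [Real.fourier_eq, hdef ((2 * π) • T ξ)]
    rw [← hT.integral_comp T.measurableEmbedding (fun x : ℝ × ℝ =>
      Complex.exp (-((((2 * π) • T ξ).1 * x.1 + ((2 * π) • T ξ).2 * x.2 : ℝ) : ℂ) * Complex.I)
        * g x)]
    congr 1
    funext v
    rw [Circle.smul_def, smul_eq_mul, Real.fourierChar_apply, inner_eq]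
    congr 2
    show ((2 * π * -(v 0 * ξ 0 + v 1 * ξ 1) : ℝ) : ℂ) * Complex.I =
      -((2 * π * ξ 0 * v 0 + 2 * π * ξ 1 * v 1 : ℝ) : ℂ) * Complex.I
    push_cast
    ring
  have hFG : Integrable (𝓕 G) := by
    have h1 : Integrable (fun y : ℝ × ℝ => Fg ((2 * π) • y)) :=
      hFg.comp_smul (by positivity)
    have h2 : Integrable (fun ξ : V2 => Fg ((2 * π) • T ξ)) :=
      (hT.integrable_comp_emb T.measurableEmbedding).2 h1
    rw [show 𝓕 G = fun ξ => Fg ((2 * π) • T ξ) from funext key]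
    exact h2
  have inv_eq : ∀ v : V2, 𝓕⁻ (𝓕 G) v = ((2 * π) ^ 2)⁻¹ •
      ∫ w : ℝ × ℝ, Complex.exp (((w.1 * (T v).1 + w.2 * (T v).2 : ℝ) : ℂ) * Complex.I) * Fg w := by
    intro v
    set F : ℝ × ℝ → ℂ := fun w =>
      Complex.exp (((w.1 * (T v).1 + w.2 * (T v).2 : ℝ) : ℂ) * Complex.I) * Fg w with hF
    rw [Real.fourierInv_eq]
    calc ∫ ξ : V2, 𝐞 ⟪ξ, v⟫ • 𝓕 G ξ
        = ∫ ξ : V2, (fun y : ℝ × ℝ => F ((2 * π) • y)) (T ξ) := by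
          congr 1
          funext ξ
          rw [key ξ, Circle.smul_def, smul_eq_mul, Real.fourierChar_apply, inner_eq]
          show _ = F ((2 * π) • T ξ)
          rw [hF]
          congr 2
          show ((2 * π * (ξ 0 * v 0 + ξ 1 * v 1) : ℝ) : ℂ) * Complex.I =
            ((2 * π * ξ 0 * v 0 + 2 * π * ξ 1 * v 1 : ℝ) : ℂ) * Complex.I
          push_cast
          ring
      _ = ∫ y : ℝ × ℝ, F ((2 * π) • y) := by
          exact hT.integral_comp T.measurableEmbedding fun y => F ((2 * π) • y)
      _ = |(((2 * π) ^ Module.finrank ℝ (ℝ × ℝ))⁻¹)| • ∫ y, F y :=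
          Measure.integral_comp_smul volume F (2 * π)
      _ = ((2 * π) ^ 2)⁻¹ • ∫ y, F y := by
          rw [show Module.finrank ℝ (ℝ × ℝ) = 2 by simp, abs_of_pos (by positivity)]
  have main := ae_fourier_inversion hG hFG
  have h2 : ∀ᵐ x : ℝ × ℝ ∂ Measure.map T volume, g x = ((2 * π) ^ 2)⁻¹ •
      ∫ w : ℝ × ℝ, Complex.exp (((w.1 * x.1 + w.2 * x.2 : ℝ) : ℂ) * Complex.I) * Fg w := by
    refine (T.measurableEmbedding.ae_map_iff).2 ?_
    filter_upwards [main] with v hv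
    calc g (T v) = 𝓕⁻ (𝓕 G) v := hv
      _ = _ := inv_eq v
  rwa [hT.map_eq] at h2

lemma sandwich_integrable {h : ℝ × ℝ → Quaternion ℝ} (hh : Integrable h)
    (a b : ℝ × ℝ → ℝ) (ha : Continuous a) (hb : Continuous b) :
    Integrable (fun x => eI (a x) * h x * eJ (b x)) := by
  have hm : AEStronglyMeasurable (fun x => eI (a x) * h x * eJ (b x)) volume :=
    ((continuous_eI.comp ha).aestronglyMeasurable.mul hh.1).mul
      (continuous_eJ.comp hb).aestronglyMeasurable
  apply Integrable.mono' hh.norm hm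
  filter_upwards with x
  rw [norm_mul, norm_mul, norm_eI, norm_eJ]
  simp

lemma Φm_QFT {f : ℝ × ℝ → Quaternion ℝ} (hf : Integrable f) (w : ℝ × ℝ) :
    Φm (QFT f w) = ∫ x : ℝ × ℝ,
      Complex.exp (-((w.1 * x.1 + w.2 * x.2 : ℝ) : ℂ) * Complex.I) * Φm (f x) := by
  unfold QFT
  rw [← ContinuousLinearMap.integral_comp_comm Φm
    (sandwich_integrable hf _ _ (by fun_prop) (by fun_prop))]
  congr 1
  funext x
  rw [Φm_kernel]
  congr 2
  push_cast
  ring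

/-- The measurable equivalence `(x₁, x₂) ↦ (x₁, -x₂)`. -/
def σe : (ℝ × ℝ) ≃ᵐ (ℝ × ℝ) := (MeasurableEquiv.refl ℝ).prodCongr (MeasurableEquiv.neg ℝ)

lemma hσ : MeasurePreserving σe volume volume := by
  have h := (MeasurePreserving.id (volume : Measure ℝ)).prod
    (Measure.measurePreserving_neg (volume : Measure ℝ))
  rw [← Measure.volume_eq_prod] at h
  exact h

lemma Φp_QFT {f : ℝ × ℝ → Quaternion ℝ} (hf : Integrable f) (w : ℝ × ℝ) :
    Φp (QFT f w) = ∫ x : ℝ × ℝ,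
      Complex.exp (-((w.1 * x.1 + w.2 * x.2 : ℝ) : ℂ) * Complex.I) * Φp (f (x.1, -x.2)) := by
  have hstep : Φp (QFT f w) = ∫ y : ℝ × ℝ,
      Complex.exp (-((w.1 * y.1 - w.2 * y.2 : ℝ) : ℂ) * Complex.I) * Φp (f y) := by
    unfold QFT
    rw [← ContinuousLinearMap.integral_comp_comm Φp
      (sandwich_integrable hf _ _ (by fun_prop) (by fun_prop))]
    congr 1
    funext y
    rw [Φp_kernel]
    congr 2
    push_cast
    ring
  rw [hstep, ← hσ.integral_comp σe.measurableEmbedding (fun y : ℝ × ℝ =>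
    Complex.exp (-((w.1 * y.1 - w.2 * y.2 : ℝ) : ℂ) * Complex.I) * Φp (f y))]
  congr 1
  funext x
  show Complex.exp (-((w.1 * x.1 - w.2 * (-x.2) : ℝ) : ℂ) * Complex.I) * Φp (f (x.1, -x.2)) = _
  congr 3
  push_cast
  ring

end QFTInv

open QFTInv in
theorem QFT_inversion (f : ℝ × ℝ → Quaternion ℝ)
    (hf : Integrable f volume) (hFf : Integrable (QFT f) volume) :
    ∀ᵐ x : ℝ × ℝ, f x =
      ((2 * π)^2)⁻¹ • ∫ w : ℝ × ℝ, eI (w.1 * x.1) * QFT f w * eJ (w.2 * x.2) := by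
  -- the Φm component
  have hm : ∀ᵐ x : ℝ × ℝ, Φm (f x) = ((2 * π) ^ 2)⁻¹ •
      ∫ w : ℝ × ℝ, Complex.exp (((w.1 * x.1 + w.2 * x.2 : ℝ) : ℂ) * Complex.I) * Φm (QFT f w) :=
    inversion_C (Φm.integrable_comp hf) (Φm.integrable_comp hFf) (fun w => Φm_QFT hf w)
  -- the Φp component, for the flipped function
  have hgσ : Integrable (fun x : ℝ × ℝ => Φp (f (x.1, -x.2))) := by
    have h := (hσ.integrable_comp_emb σe.measurableEmbedding).2 (Φp.integrable_comp hf)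
    exact h
  have hp0 : ∀ᵐ x : ℝ × ℝ, Φp (f (x.1, -x.2)) = ((2 * π) ^ 2)⁻¹ •
      ∫ w : ℝ × ℝ, Complex.exp (((w.1 * x.1 + w.2 * x.2 : ℝ) : ℂ) * Complex.I) * Φp (QFT f w) :=
    inversion_C hgσ (Φp.integrable_comp hFf) (fun w => Φp_QFT hf w)
  have hp1 : ∀ᵐ x : ℝ × ℝ, Φp (f ((σe x).1, -(σe x).2)) = ((2 * π) ^ 2)⁻¹ •
      ∫ w : ℝ × ℝ, Complex.exp (((w.1 * (σe x).1 + w.2 * (σe x).2 : ℝ) : ℂ) * Complex.I)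
        * Φp (QFT f w) := by
    refine (σe.measurableEmbedding.ae_map_iff (p := fun y : ℝ × ℝ =>
      Φp (f (y.1, -y.2)) = ((2 * π) ^ 2)⁻¹ •
        ∫ w : ℝ × ℝ, Complex.exp (((w.1 * y.1 + w.2 * y.2 : ℝ) : ℂ) * Complex.I)
          * Φp (QFT f w))).1 ?_
    rwa [hσ.map_eq]
  have hp : ∀ᵐ x : ℝ × ℝ, Φp (f x) = ((2 * π) ^ 2)⁻¹ •
      ∫ w : ℝ × ℝ, Complex.exp (((w.1 * x.1 - w.2 * x.2 : ℝ) : ℂ) * Complex.I)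
        * Φp (QFT f w) := by
    filter_upwards [hp1] with x hx
    have h1 : ((σe x).1, -(σe x).2) = x := by
      show (x.1, -(-x.2)) = x
      simp
    rw [h1] at hx
    rw [hx]
    congr 1
    congr 1
    funext w
    congr 2
    show ((w.1 * x.1 + w.2 * (-x.2) : ℝ) : ℂ) * Complex.I = _
    push_cast
    ring
  filter_upwards [hp, hm] with x h1 h2
  have hsand : Integrable (fun w : ℝ × ℝ => eI (w.1 * x.1) * QFT f w * eJ (w.2 * x.2)) :=
    sandwich_integrable hFf _ _ (by fun_prop) (by fun_prop)
  apply quat_eq_of_Φ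
  · -- Φp
    rw [_root_.map_smul, ← ContinuousLinearMap.integral_comp_comm Φp hsand]
    rw [h1]
    congr 1
    congr 1
    funext w
    rw [Φp_kernel]
    congr 2
    push_cast
    ring
  · -- Φm
    rw [_root_.map_smul, ← ContinuousLinearMap.integral_comp_comm Φm hsand]
    rw [h2]
    congr 1
    congr 1
    funext w
    rw [Φm_kernel]
    congr 2
    push_cast
    ring
end
end

section
/- (Relation of ST-QOLCT to QFT) For f, φ ∈ L²(ℝ², ℍ), the ST-QOLCT factors as S_φ[f](w, u) = (2π i b₁)^{-1/2} e^{i[-(w₁/b₁)(d₁p₁ - b₁q₁) + (d₁/(2b₁))(w₁² + p₁²)]} · F[h(·, u)](w₁/b₁, w₂/b₂) · (2π j b₂)^{-1/2} e^{j[-(w₂/b₂)(d₂p₂ - b₂q₂) + (d₂/(2b₂))(w₂² + p₂²)]}, where h(x, u) = e^{i[(a₁/(2b₁))x₁² + (1/b₁)x₁p₁]} f(x) conj(φ(x-u)) e^{j[(a₂/(2b₂))x₂² + (1/b₂)x₂p₂]} and F is the two-sided QFT. -/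
open MeasureTheory Real

noncomputable section

lemma eI_mul (a b : ℝ) : eI a * eI b = eI (a + b) := by
  ext <;> simp only [Quaternion.re_mul, Quaternion.imI_mul, Quaternion.imJ_mul, Quaternion.imK_mul] <;> simp [eI, Real.cos_add, Real.sin_add] <;> ring

lemma eJ_mul (a b : ℝ) : eJ a * eJ b = eJ (a + b) := by
  ext <;> simp only [Quaternion.re_mul, Quaternion.imI_mul, Quaternion.imJ_mul, Quaternion.imK_mul] <;> simp [eJ, Real.cos_add, Real.sin_add] <;> ring

lemma helper_int (c d : Quaternion ℝ) (g : ℝ × ℝ → Quaternion ℝ) :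
    ∫ x, c * g x * d = c * (∫ x, g x) * d := by
  by_cases hc : c = 0
  · simp [hc]
  by_cases hd : d = 0
  · simp [hd]
  by_cases hg : Integrable g
  · have h1 := (ContinuousLinearMap.mul ℝ (Quaternion ℝ) c).integral_comp_comm hg
    have h2 := ((ContinuousLinearMap.mul ℝ (Quaternion ℝ)).flip d).integral_comp_comm
      (hg.const_mul c)
    simp only [ContinuousLinearMap.mul_apply', ContinuousLinearMap.flip_apply] at h1 h2
    rw [h2, h1]
  · have h2 : ¬ Integrable (fun x => c * g x * d) := by
      intro h
      apply hg
      have h3 := (h.const_mul c⁻¹).mul_const d⁻¹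
      have h4 : (fun x => c⁻¹ * (c * g x * d) * d⁻¹) = g := by
        funext x
        simp only [← mul_assoc]
        rw [inv_mul_cancel₀ hc, one_mul, mul_assoc, mul_inv_cancel₀ hd, mul_one]
      rwa [h4] at h3
    rw [integral_undef hg, integral_undef h2, mul_zero, zero_mul]

lemma KI_split (P : OLCTParams) (x w : ℝ) :
    KI P x w =
      ((Real.sqrt (2 * π * |P.b|))⁻¹ •
          (eI (-(π/4)) *
            eI (-(w/P.b) * (P.d*P.p - P.b*P.q) + (P.d/(2*P.b)) * (w^2 + P.p^2)))) *
        (eI (-(w/P.b * x)) * eI ((P.a/(2*P.b))*x^2 + (1/P.b)*x*P.p)) := by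
  have hb := P.hb
  rw [KI]
  simp only [smul_mul_assoc, mul_assoc, eI_mul]
  congr 2
  field_simp
  ring

lemma KJ_split (P : OLCTParams) (x w : ℝ) :
    KJ P x w =
      (eJ ((P.a/(2*P.b))*x^2 + (1/P.b)*x*P.p) * eJ (-(w/P.b * x))) *
        ((Real.sqrt (2 * π * |P.b|))⁻¹ •
          (eJ (-(π/4)) *
            eJ (-(w/P.b) * (P.d*P.p - P.b*P.q) + (P.d/(2*P.b)) * (w^2 + P.p^2)))) := by
  have hb := P.hb
  rw [KJ]
  simp only [mul_smul_comm, mul_assoc, eJ_mul]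
  congr 2
  field_simp
  ring

theorem STQOLCT_eq_QFT (P1 P2 : OLCTParams) (φ f : ℝ × ℝ → Quaternion ℝ)
    (hf : MemLp f 2 volume) (hφ : MemLp φ 2 volume) (w u : ℝ × ℝ) :
    STQOLCT P1 P2 φ f w u =
      ((Real.sqrt (2 * π * |P1.b|))⁻¹ •
          (eI (-(π/4)) *
            eI (-(w.1/P1.b) * (P1.d*P1.p - P1.b*P1.q) + (P1.d/(2*P1.b)) * (w.1^2 + P1.p^2)))) *
        QFT (fun x => eI ((P1.a/(2*P1.b))*x.1^2 + (1/P1.b)*x.1*P1.p) *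
              (f x * star (φ (x - u))) *
              eJ ((P2.a/(2*P2.b))*x.2^2 + (1/P2.b)*x.2*P2.p))
          (w.1/P1.b, w.2/P2.b) *
        ((Real.sqrt (2 * π * |P2.b|))⁻¹ •
          (eJ (-(π/4)) *
            eJ (-(w.2/P2.b) * (P2.d*P2.p - P2.b*P2.q) + (P2.d/(2*P2.b)) * (w.2^2 + P2.p^2)))) := by
  set c1 := ((Real.sqrt (2 * π * |P1.b|))⁻¹ •
          (eI (-(π/4)) *
            eI (-(w.1/P1.b) * (P1.d*P1.p - P1.b*P1.q) + (P1.d/(2*P1.b)) * (w.1^2 + P1.p^2))))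
  set c2 := ((Real.sqrt (2 * π * |P2.b|))⁻¹ •
          (eJ (-(π/4)) *
            eJ (-(w.2/P2.b) * (P2.d*P2.p - P2.b*P2.q) + (P2.d/(2*P2.b)) * (w.2^2 + P2.p^2))))
  set g : ℝ × ℝ → Quaternion ℝ := fun x =>
    eI (-((w.1/P1.b) * x.1)) *
      (eI ((P1.a/(2*P1.b))*x.1^2 + (1/P1.b)*x.1*P1.p) *
        (f x * star (φ (x - u))) *
        eJ ((P2.a/(2*P2.b))*x.2^2 + (1/P2.b)*x.2*P2.p)) *
      eJ (-((w.2/P2.b) * x.2)) with hg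
  have hQ : QFT (fun x => eI ((P1.a/(2*P1.b))*x.1^2 + (1/P1.b)*x.1*P1.p) *
              (f x * star (φ (x - u))) *
              eJ ((P2.a/(2*P2.b))*x.2^2 + (1/P2.b)*x.2*P2.p))
          (w.1/P1.b, w.2/P2.b) = ∫ x, g x := rfl
  rw [hQ, STQOLCT, ← helper_int c1 c2 g]
  congr 1
  funext x
  rw [KI_split, KJ_split, hg]
  simp only [mul_assoc, c1, c2]
end
end
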